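/- If no component of G is a complete graph, then γ_r(G) ≤ ⌊(n(G) + γ(G) − τ(G))/2⌋. -/

import Mathlib

open Finset

variable {V : Type*}

/-- `S` is a dominating set of `G`. -/
def Dominating (G : SimpleGraph V) (S : Set V) : Prop :=
  ∀ v, v ∉ S → ∃ u ∈ S, G.Adj u v

/-- `S` is a secure dominating set of `G`. -/
def SecureDominating (G : SimpleGraph V) (S : Set V) : Prop :=
  Dominating G S ∧ ∀ v, v ∉ S → ∃ u ∈ S, G.Adj u v ∧ Dominating G ((S \ {u}) ∪ {v})

/-- The domination number `γ(G)`. -/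
noncomputable def domNum (G : SimpleGraph V) : ℕ :=
  sInf {n | ∃ S : Set V, Dominating G S ∧ S.ncard = n}

/-- The secure domination number `γ_s(G)`. -/
noncomputable def secDomNum (G : SimpleGraph V) : ℕ :=
  sInf {n | ∃ S : Set V, SecureDominating G S ∧ S.ncard = n}

/-- `v` is undefended with respect to the guard function `f`. -/
def Undefended (G : SimpleGraph V) (f : V → ℕ) (v : V) : Prop :=
  f v = 0 ∧ ∀ u, G.Adj u v → f u = 0

/-- `f` is a weak Roman dominating function on `G`. -/
def IsWRDF [DecidableEq V] (G : SimpleGraph V) (f : V → ℕ) : Prop :=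
  (∀ v, f v ≤ 2) ∧ ∀ v, f v = 0 → ∃ u, G.Adj u v ∧ 1 ≤ f u ∧
    ∀ w, ¬ Undefended G (Function.update (Function.update f u (f u - 1)) v 1) w

/-- The weak Roman domination number `γ_r(G)`. -/
noncomputable def weakRomanNum [Fintype V] [DecidableEq V] (G : SimpleGraph V) : ℕ :=
  sInf {n | ∃ f : V → ℕ, IsWRDF G f ∧ ∑ v, f v = n}

/-- The closed neighbourhood of a vertex. -/
def closedNbr (G : SimpleGraph V) (v : V) : Set V := insert v (G.neighborSet v)

/-- No connected component of `G` is a complete graph: every component contains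
two distinct non-adjacent vertices. -/
def NoCompleteComponent (G : SimpleGraph V) : Prop :=
  ∀ v : V, ∃ u w, G.Reachable v u ∧ G.Reachable v w ∧ u ≠ w ∧ ¬ G.Adj u w

/-- `T(S)`: the vertices outside `S` having a true twin in `S`. -/
def trueTwinSet (G : SimpleGraph V) (S : Set V) : Set V :=
  {v | v ∉ S ∧ ∃ s ∈ S, closedNbr G v = closedNbr G s}

/-- `τ(G)`: the maximum of `|T(S)|` over all minimum dominating sets `S`. -/
noncomputable def tauNum (G : SimpleGraph V) : ℕ :=
  sSup {n | ∃ S : Set V, Dominating G S ∧ S.ncard = domNum G ∧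
    (trueTwinSet G S).ncard = n}


section Helpers
variable {G : SimpleGraph V}
variable {G : SimpleGraph V}

lemma mem_closedNbr' {v z : V} : z ∈ closedNbr G v ↔ z = v ∨ G.Adj v z := by
  simp [closedNbr]

lemma complete_comp_contra (hnc : NoCompleteComponent G) (x : V)
    (htw : ∀ w, G.Adj x w → closedNbr G w = closedNbr G x) : False := by
  obtain ⟨u, w, hu, hw, hne, hnadj⟩ := hnc x
  have key : ∀ {a b : V}, G.Walk a b → a ∈ closedNbr G x → b ∈ closedNbr G x := by
    intro a b p
    induction p with
    | nil => exact id
    | @cons a c b h q ih =>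
      intro ha
      apply ih
      rcases mem_closedNbr'.1 ha with rfl | hadj
      · exact mem_closedNbr'.2 (Or.inr h)
      · rw [← htw a hadj]
        exact mem_closedNbr'.2 (Or.inr h)
  obtain ⟨p⟩ := hu
  obtain ⟨q⟩ := hw
  have hux := key p (mem_closedNbr'.2 (Or.inl rfl))
  have hwx := key q (mem_closedNbr'.2 (Or.inl rfl))
  rcases mem_closedNbr'.1 hux with rfl | hadju
  · rcases mem_closedNbr'.1 hwx with rfl | hadjw
    · exact hne rfl
    · exact hnadj hadjw
  · rcases mem_closedNbr'.1 hwx with rfl | hadjw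
    · exact hnadj hadju.symm
    · have : w ∈ closedNbr G u := by
        rw [htw u hadju]
        exact mem_closedNbr'.2 (Or.inr hadjw)
      rcases mem_closedNbr'.1 this with rfl | h
      · exact hne rfl
      · exact hnadj h

lemma secure_compl [Fintype V] (hnc : NoCompleteComponent G) (S : Set V)
    (hdom : Dominating G S)
    (hmin : ∀ S' : Set V, Dominating G S' → S.ncard ≤ S'.ncard) :
    SecureDominating G (S ∪ trueTwinSet G S)ᶜ := by
  classical
  set T := trueTwinSet G S with hT
  set D := (S ∪ T)ᶜ with hD
  have hDmem : ∀ v, v ∈ D ↔ v ∉ S ∧ v ∉ T := by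
    intro v; simp [hD]
  have htwin : ∀ t ∈ T, ∃ s ∈ S, closedNbr G t = closedNbr G s := fun t ht => ht.2
  have hSfin : S.Finite := Set.toFinite S
  -- a vertex of S all of whose neighbours are in S ∪ T yields a contradiction
  have noDnbr : ∀ x ∈ S, (∀ d, G.Adj x d → d ∈ S ∪ T) → False := by
    intro x hx hall
    by_cases hS0 : ∃ s ∈ S, G.Adj x s
    · obtain ⟨s', hs'S, hs'adj⟩ := hS0
      by_cases hEP : ∃ v, v ∉ S ∧ G.Adj x v ∧ ∀ s ∈ S, G.Adj s v → s = x
      · obtain ⟨v, hvS, hxv, hpriv⟩ := hEP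
        have hvT : v ∈ T := by
          rcases hall v hxv with h | h
          · exact absurd h hvS
          · exact h
        obtain ⟨sv, hsvS, hcl⟩ := htwin v hvT
        have hsvmem : sv ∈ closedNbr G v := by
          rw [hcl]; exact mem_closedNbr'.2 (Or.inl rfl)
        have hvsv : G.Adj v sv := by
          rcases mem_closedNbr'.1 hsvmem with h | h
          · exact absurd (h ▸ hsvS) hvS
          · exact h
        have hsvx : sv = x := hpriv sv hsvS hvsv.symm
        subst hsvx
        -- now closedNbr v = closedNbr x; s' ∈ closedNbr x
        have hs'mem : s' ∈ closedNbr G v := by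
          rw [hcl]; exact mem_closedNbr'.2 (Or.inr hs'adj)
        rcases mem_closedNbr'.1 hs'mem with h | h
        · exact hvS (h ▸ hs'S)
        · have := hpriv s' hs'S h.symm
          subst this
          exact G.loopless.irrefl s' hs'adj
      · push_neg at hEP
        have hdom' : Dominating G (S \ {x}) := by
          intro w hw
          by_cases hwx : w = x
          · subst hwx
            exact ⟨s', ⟨hs'S, fun h => G.loopless.irrefl w
              (by rw [show s' = w from h] at hs'adj; exact hs'adj)⟩, hs'adj.symm⟩
          · have hwS : w ∉ S := fun h => hw ⟨h, hwx⟩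
            obtain ⟨s, hsS, hsw⟩ := hdom w hwS
            by_cases hsx : s = x
            · subst hsx
              obtain ⟨s2, hs2S, hs2w, hs2x⟩ := hEP w hwS hsw
              exact ⟨s2, ⟨hs2S, hs2x⟩, hs2w⟩
            · exact ⟨s, ⟨hsS, hsx⟩, hsw⟩
        have hlt : (S \ {x}).ncard < S.ncard :=
          Set.ncard_lt_ncard (Set.sdiff_singleton_ssubset.2 hx) hSfin
        exact absurd (hmin _ hdom') (by omega)
    · push_neg at hS0
      apply complete_comp_contra hnc x
      intro w hxw
      rcases hall w hxw with hwS | hwT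
      · exact absurd hxw (hS0 w hwS)
      · obtain ⟨sw, hswS, hcl⟩ := htwin w hwT
        have hx1 : x ∈ closedNbr G w := mem_closedNbr'.2 (Or.inr hxw.symm)
        have hx2 : x = sw ∨ G.Adj sw x := by
          rw [hcl] at hx1; exact mem_closedNbr'.1 hx1
        rcases hx2 with h | h
        · rw [hcl, ← h]
        · exact absurd h.symm (hS0 sw hswS)
  -- extract an S-vertex from a witness
  have witness : ∀ (u x : V), ∀ y ∈ S ∪ T, y ≠ x → ¬ G.Adj x y →
      (∀ d ∈ D, G.Adj y d → d = u) →
      ∃ s0 ∈ S, s0 ≠ x ∧ ¬ G.Adj x s0 ∧ ∀ d ∈ D, G.Adj s0 d → d = u := by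
    intro u x y hy hyx hnadj hDy
    rcases hy with hyS | hyT
    · exact ⟨y, hyS, hyx, hnadj, hDy⟩
    · obtain ⟨s0, hs0S, hcl⟩ := htwin y hyT
      refine ⟨s0, hs0S, ?_, ?_, ?_⟩
      · rintro rfl
        have h1 : y ∈ closedNbr G s0 := by
          rw [← hcl]; exact mem_closedNbr'.2 (Or.inl rfl)
        rcases mem_closedNbr'.1 h1 with h | h
        · exact hyx h
        · exact hnadj h
      · intro hadj
        have h1 : x ∈ closedNbr G y := by
          rw [hcl]; exact mem_closedNbr'.2 (Or.inr hadj.symm)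
        rcases mem_closedNbr'.1 h1 with h | h
        · exact hyx h.symm
        · exact hnadj h.symm
      · intro d hdD hadj
        have h1 : d ∈ closedNbr G y := by
          rw [hcl]; exact mem_closedNbr'.2 (Or.inr hadj)
        rcases mem_closedNbr'.1 h1 with h | h
        · exact absurd hyT (((hDmem d).1 hdD).2 ∘ (h ▸ ·))
        · exact hDy d hdD h
  -- the core swap argument
  have core : ∀ x ∈ S, ∀ u ∈ D, G.Adj x u →
      (∀ v, v ∉ S → G.Adj x v → (∀ s ∈ S, G.Adj s v → s = x) → v ∈ D → v = u) →
      ∀ s0 ∈ S, s0 ≠ x → ¬ G.Adj x s0 → (∀ d ∈ D, G.Adj s0 d → d = u) → False := by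
    intro x hx u huD hxu hEP s0 hs0S hs0x hnadj hD0
    have hs0u : G.Adj s0 u := by
      by_cases h : ∃ d ∈ D, G.Adj s0 d
      · obtain ⟨d, hdD, hadj⟩ := h
        exact (hD0 d hdD hadj) ▸ hadj
      · push_neg at h
        exact (noDnbr s0 hs0S (fun d hadj => by
          by_contra hd
          exact h d hd hadj)).elim
    have hdomstar : Dominating G (insert u (S \ {s0, x})) := by
      intro w hw
      have hwu : w ≠ u := fun h => hw (by rw [h]; exact Set.mem_insert u _)
      by_cases hwx : w = x
      · subst hwx; exact ⟨u, Set.mem_insert u _, hxu.symm⟩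
      by_cases hws0 : w = s0
      · subst hws0; exact ⟨u, Set.mem_insert u _, hs0u.symm⟩
      have hwS : w ∉ S := by
        intro hwSmem
        exact hw (Set.mem_insert_of_mem _ ⟨hwSmem, by simp [hws0, hwx]⟩)
      by_cases hEx : ∃ s ∈ S, G.Adj s w ∧ s ≠ s0 ∧ s ≠ x
      · obtain ⟨s, hsS, hsw, h1, h2⟩ := hEx
        exact ⟨s, Set.mem_insert_of_mem _ ⟨hsS, by simp [h1, h2]⟩, hsw⟩
      push_neg at hEx
      by_cases hwD : w ∈ D
      · by_cases hs0w : G.Adj s0 w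
        · exact absurd (hD0 w hwD hs0w) hwu
        · have hdoms : ∀ s ∈ S, G.Adj s w → s = x := by
            intro s hsS hsw
            exact hEx s hsS hsw (fun h => hs0w (h ▸ hsw))
          have hxw : G.Adj x w := by
            obtain ⟨s, hsS, hsw⟩ := hdom w hwS
            exact (hdoms s hsS hsw) ▸ hsw
          exact (hwu (hEP w hwS hxw hdoms hwD)).elim
      · have hwT : w ∈ T := by
          have hmem : w ∈ S ∪ T := by
            by_contra hmem
            exact hwD ((hDmem w).2 ⟨fun h => hmem (Or.inl h), fun h => hmem (Or.inr h)⟩)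
          rcases hmem with h | h
          · exact absurd h hwS
          · exact h
        obtain ⟨sw, hswS, hcl⟩ := htwin w hwT
        have hswmem : sw ∈ closedNbr G w := by
          rw [hcl]; exact mem_closedNbr'.2 (Or.inl rfl)
        have hwsw : G.Adj w sw := by
          rcases mem_closedNbr'.1 hswmem with h | h
          · exact absurd (h ▸ hswS) hwS
          · exact h
        have hcases : sw = s0 ∨ sw = x := by
          by_cases h : sw = s0
          · exact Or.inl h
          · exact Or.inr (hEx sw hswS hwsw.symm h)
        have humem : u ∈ closedNbr G w := by
          rw [hcl]
          rcases hcases with rfl | rfl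
          · exact mem_closedNbr'.2 (Or.inr hs0u)
          · exact mem_closedNbr'.2 (Or.inr hxu)
        rcases mem_closedNbr'.1 humem with h | h
        · exact absurd h.symm hwu
        · exact ⟨u, Set.mem_insert u _, h.symm⟩
    -- cardinality contradiction
    have huS : u ∉ S := ((hDmem u).1 huD).1
    have hsub : ({s0, x} : Set V) ⊆ S := by
      intro z hz
      rcases hz with rfl | hz
      · exact hs0S
      · exact (Set.mem_singleton_iff.1 hz) ▸ hx
    have hpair : ({s0, x} : Set V).ncard = 2 := Set.ncard_pair hs0x
    have hcard1 : (S \ {s0, x}).ncard = S.ncard - 2 := by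
      rw [Set.ncard_diff hsub (Set.toFinite _), hpair]
    have hcard2 : (insert u (S \ {s0, x})).ncard = S.ncard - 2 + 1 := by
      rw [Set.ncard_insert_of_notMem (fun h => huS h.1) (Set.toFinite _), hcard1]
    have h2le : 2 ≤ S.ncard := by
      have := Set.ncard_le_ncard hsub hSfin
      rwa [hpair] at this
    have := hmin _ hdomstar
    rw [hcard2] at this
    omega
  -- existence of a "good" defender for every vertex of S
  have goodX : ∀ x ∈ S, ∃ u ∈ D, G.Adj x u ∧
      ∀ y ∈ S ∪ T, y ≠ x → ¬ G.Adj x y → ∃ d ∈ D, d ≠ u ∧ G.Adj y d := by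
    intro x hx
    have hxD : ∃ u ∈ D, G.Adj x u := by
      by_contra h
      push_neg at h
      exact noDnbr x hx (fun d hadj => by
        by_contra hd
        exact h d hd hadj)
    by_cases hEPD : ∃ v, v ∉ S ∧ G.Adj x v ∧ (∀ s ∈ S, G.Adj s v → s = x) ∧ v ∈ D
    · obtain ⟨v, hvS, hxv, hpriv, hvD⟩ := hEPD
      refine ⟨v, hvD, hxv, ?_⟩
      intro y hy hyx hnadj
      by_contra hcon
      push_neg at hcon
      have hall : ∀ d ∈ D, G.Adj y d → d = v := by
        intro d hd hadj
        by_contra hne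
        exact hcon d hd hne hadj
      obtain ⟨s0, hs0S, hs0x, hs0nadj, hs0D⟩ := witness v x y hy hyx hnadj hall
      have hs0v : G.Adj s0 v := by
        by_cases h : ∃ d ∈ D, G.Adj s0 d
        · obtain ⟨d, hdD, hadj⟩ := h
          exact (hs0D d hdD hadj) ▸ hadj
        · push_neg at h
          exact (noDnbr s0 hs0S (fun d hadj => by
            by_contra hd
            exact h d hd hadj)).elim
      exact hs0x (hpriv s0 hs0S hs0v)
    · obtain ⟨u, huD, hxu⟩ := hxD
      refine ⟨u, huD, hxu, ?_⟩
      intro y hy hyx hnadj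
      by_contra hcon
      push_neg at hcon
      have hall : ∀ d ∈ D, G.Adj y d → d = u := by
        intro d hd hadj
        by_contra hne
        exact hcon d hd hne hadj
      obtain ⟨s0, hs0S, hs0x, hs0nadj, hs0D⟩ := witness u x y hy hyx hnadj hall
      exact core x hx u huD hxu
        (fun v h1 h2 h3 h4 => by
          exact absurd ⟨v, h1, h2, h3, h4⟩ hEPD) s0 hs0S hs0x hs0nadj hs0D
  -- extend to S ∪ T
  have goodXT : ∀ x ∈ S ∪ T, ∃ u ∈ D, G.Adj x u ∧
      ∀ y ∈ S ∪ T, y ≠ x → ¬ G.Adj x y → ∃ d ∈ D, d ≠ u ∧ G.Adj y d := by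
    intro x hxmem
    rcases hxmem with hxS | hxT
    · exact goodX x hxS
    · obtain ⟨s, hsS, hcl⟩ := htwin x hxT
      obtain ⟨u, huD, hsu, hgood⟩ := goodX s hsS
      have hxu : G.Adj x u := by
        have h1 : u ∈ closedNbr G x := by
          rw [hcl]; exact mem_closedNbr'.2 (Or.inr hsu)
        rcases mem_closedNbr'.1 h1 with h | h
        · exact absurd (h ▸ hxT) ((hDmem u).1 huD).2
        · exact h
      refine ⟨u, huD, hxu, ?_⟩
      intro y hy hyx hnadj
      have hys : y ≠ s := by
        rintro rfl
        apply hnadj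
        have h1 : y ∈ closedNbr G x := by
          rw [hcl]; exact mem_closedNbr'.2 (Or.inl rfl)
        rcases mem_closedNbr'.1 h1 with h | h
        · exact absurd h hyx
        · exact h
      have hnadj' : ¬ G.Adj s y := by
        intro h
        have h1 : y ∈ closedNbr G x := by
          rw [hcl]; exact mem_closedNbr'.2 (Or.inr h)
        rcases mem_closedNbr'.1 h1 with h2 | h2
        · exact hyx h2
        · exact hnadj h2
      exact hgood y hy hys hnadj'
  -- assemble
  constructor
  · intro v hv
    have hvmem : v ∈ S ∪ T := Set.notMem_compl_iff.mp hv
    obtain ⟨u, huD, hadj, -⟩ := goodXT v hvmem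
    exact ⟨u, huD, hadj.symm⟩
  · intro v hv
    have hvmem : v ∈ S ∪ T := Set.notMem_compl_iff.mp hv
    obtain ⟨u, huD, hadj, hgood⟩ := goodXT v hvmem
    refine ⟨u, huD, hadj.symm, ?_⟩
    intro w hw
    by_cases hwu : w = u
    · subst hwu
      exact ⟨v, Set.mem_union_right _ rfl, hadj⟩
    · have hwD : w ∉ D := by
        intro h
        exact hw (Set.mem_union_left _ ⟨h, hwu⟩)
      have hwv : w ≠ v := fun h => hw (Set.mem_union_right _ (by rw [h]; rfl))
      have hwmem : w ∈ S ∪ T := Set.notMem_compl_iff.mp hwD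
      by_cases hvw : G.Adj v w
      · exact ⟨v, Set.mem_union_right _ rfl, hvw⟩
      · obtain ⟨d, hdD, hdu, hadjwd⟩ := hgood w hwmem hwv hvw
        exact ⟨d, Set.mem_union_left _ ⟨hdD, hdu⟩, hadjwd.symm⟩

end Helpers

section Helpers2
variable [Fintype V] [DecidableEq V] {G : SimpleGraph V}
variable [Fintype V] [DecidableEq V] {G : SimpleGraph V}

open Classical in
lemma sum_indicator (A : Set V) (c : ℕ) :
    ∑ v, (if v ∈ A then c else 0) = c * A.ncard := by
  have h1 : ∀ v : V, (if v ∈ A then c else 0) = c * (if v ∈ A then 1 else 0) := by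
    intro v; split <;> simp
  rw [Finset.sum_congr rfl (fun v _ => h1 v), ← Finset.mul_sum]
  congr 1
  rw [Finset.sum_boole, Nat.cast_id, Set.ncard_eq_toFinset_card']
  congr 1
  ext z
  simp

lemma wrn_le_of_secure (A : Set V) (h : SecureDominating G A) :
    weakRomanNum G ≤ A.ncard := by
  classical
  obtain ⟨hdomA, hsec⟩ := h
  set f : V → ℕ := fun v => if v ∈ A then 1 else 0 with hf
  have hWRDF : IsWRDF G f := by
    refine ⟨fun v => by by_cases hv : v ∈ A <;> simp [hf, hv], ?_⟩
    intro v hv0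
    have hvA : v ∉ A := by
      by_contra h
      simp [hf, h] at hv0
    obtain ⟨u, huA, hadj, hdom'⟩ := hsec v hvA
    refine ⟨u, hadj, by simp [hf, huA], ?_⟩
    rintro w ⟨h1, h2⟩
    have hgeval : ∀ z, (Function.update (Function.update f u (f u - 1)) v 1) z
        = if z ∈ (A \ {u}) ∪ {v} then 1 else 0 := by
      intro z
      rw [Function.update_apply, Function.update_apply]
      by_cases hzv : z = v
      · simp [hzv, hvA]
      · by_cases hzu : z = u
        · subst hzu
          simp [hzv, hf, huA]
        · by_cases hzA : z ∈ A <;> simp [hzv, hzu, hf, hzA]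
    have hwmem : w ∉ (A \ {u}) ∪ {v} := by
      intro hmem
      rw [hgeval w, if_pos hmem] at h1
      exact one_ne_zero h1
    obtain ⟨z, hz, hadjz⟩ := hdom' w hwmem
    have h3 := h2 z hadjz
    rw [hgeval z, if_pos hz] at h3
    exact one_ne_zero h3
  calc weakRomanNum G ≤ ∑ v, f v := Nat.sInf_le ⟨f, hWRDF, rfl⟩
    _ = A.ncard := by rw [hf]; rw [sum_indicator A 1, one_mul]

lemma wrn_le_two_dom (S : Set V) (hdom : Dominating G S) :
    weakRomanNum G ≤ 2 * S.ncard := by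
  classical
  set f : V → ℕ := fun v => if v ∈ S then 2 else 0 with hf
  have hWRDF : IsWRDF G f := by
    refine ⟨fun v => by by_cases hv : v ∈ S <;> simp [hf, hv], ?_⟩
    intro v hv0
    have hvS : v ∉ S := by
      by_contra h
      simp [hf, h] at hv0
    obtain ⟨u, huS, hadj⟩ := hdom v hvS
    refine ⟨u, hadj, by simp [hf, huS], ?_⟩
    rintro w ⟨h1, h2⟩
    have hgeval : ∀ z, (Function.update (Function.update f u (f u - 1)) v 1) z
        = if z = v then 1 else if z ∈ S then (if z = u then 1 else 2) else 0 := by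
      intro z
      rw [Function.update_apply, Function.update_apply]
      by_cases hzv : z = v
      · simp [hzv]
      · by_cases hzu : z = u
        · subst hzu
          simp [hzv, hf, huS]
        · by_cases hzS : z ∈ S <;> simp [hzv, hzu, hf, hzS]
    by_cases hwv : w = v
    · rw [hgeval w, if_pos hwv] at h1
      exact one_ne_zero h1
    by_cases hwS : w ∈ S
    · have huv : u ≠ v := fun h => hvS (h ▸ huS)
      by_cases hwu : w = u <;> rw [hgeval w] at h1 <;> simp [hwv, hwS, hwu, huv, huS] at h1
    · obtain ⟨s, hsS, hsw⟩ := hdom w hwS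
      have h3 := h2 s hsw
      have hsv : s ≠ v := fun h => hvS (h ▸ hsS)
      rw [hgeval s] at h3
      have huv : u ≠ v := fun h => hvS (h ▸ huS)
      by_cases hsu : s = u <;> simp [hsv, hsS, hsu, huv, huS] at h3
  calc weakRomanNum G ≤ ∑ v, f v := Nat.sInf_le ⟨f, hWRDF, rfl⟩
    _ = 2 * S.ncard := by rw [hf]; exact sum_indicator S 2

end Helpers2

theorem stmt14 {V : Type*} [Fintype V] [DecidableEq V] (G : SimpleGraph V)
    (hnc : NoCompleteComponent G) :
    weakRomanNum G ≤ (Fintype.card V + domNum G - tauNum G) / 2 := by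
  classical
  have hne : ({n | ∃ S : Set V, Dominating G S ∧ S.ncard = n} : Set ℕ).Nonempty :=
    ⟨_, Set.univ, fun v hv => (hv (Set.mem_univ v)).elim, rfl⟩
  obtain ⟨S1, hS1dom, hS1card⟩ : ∃ S : Set V, Dominating G S ∧ S.ncard = domNum G :=
    Nat.sInf_mem hne
  have htne : ({n | ∃ S : Set V, Dominating G S ∧ S.ncard = domNum G ∧
      (trueTwinSet G S).ncard = n} : Set ℕ).Nonempty :=
    ⟨_, S1, hS1dom, hS1card, rfl⟩
  have htbdd : BddAbove {n | ∃ S : Set V, Dominating G S ∧ S.ncard = domNum G ∧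
      (trueTwinSet G S).ncard = n} := by
    refine ⟨Fintype.card V, ?_⟩
    rintro n ⟨S, -, -, rfl⟩
    exact le_trans (Set.ncard_le_ncard (Set.subset_univ _) Set.finite_univ)
      (le_of_eq (by rw [Set.ncard_univ, Nat.card_eq_fintype_card]))
  obtain ⟨S0, hdom0, hcard0, htau0⟩ :
      ∃ S : Set V, Dominating G S ∧ S.ncard = domNum G ∧
        (trueTwinSet G S).ncard = tauNum G :=
    Nat.sSup_mem htne htbdd
  have hmin0 : ∀ S' : Set V, Dominating G S' → S0.ncard ≤ S'.ncard := by
    intro S' h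
    rw [hcard0]
    exact Nat.sInf_le ⟨S', h, rfl⟩
  have hsec := secure_compl hnc S0 hdom0 hmin0
  have hB := wrn_le_of_secure _ hsec
  have hA := wrn_le_two_dom S0 hdom0
  have hdisj : Disjoint S0 (trueTwinSet G S0) :=
    Set.disjoint_left.mpr (fun a ha hat => hat.1 ha)
  have hcount := Set.ncard_add_ncard_compl (S0 ∪ trueTwinSet G S0)
  rw [Set.ncard_union_eq hdisj (Set.toFinite _) (Set.toFinite _),
    Nat.card_eq_fintype_card, hcard0, htau0] at hcount
  rw [hcard0] at hA
  omega
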